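/- arXiv:1208.2417 — 4 statements merged into one kernel-verified Lean document; each statement's English description precedes it below -/
import Mathlib

section
/- Let N ≥ 2 and 1 ≤ K < N be integers and let p be the uniform distribution on B_K. Then the information matrix M(p) is invertible and trace(M(p)⁻¹) = N/K + N·(N−1)²/(N−K). -/
/-- `BK N K` is the set of binary vectors in `ℝ^N` with exactly `K` entries
equal to `1`. -/
noncomputable def BK (N K : ℕ) : Finset (Fin N → ℝ) :=
  (Finset.univ.powersetCard K : Finset (Finset (Fin N))).image
    (fun s => fun i => if i ∈ s then (1 : ℝ) else 0)

/-- The information matrix `M(p) = ∑_{x ∈ X} (p(x)/(xᵀx)) · x·xᵀ`. -/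
noncomputable def infoMatrix {N : ℕ} (X : Finset (Fin N → ℝ)) (p : (Fin N → ℝ) → ℝ) :
    Matrix (Fin N) (Fin N) ℝ :=
  ∑ x ∈ X, (p x / ∑ i, x i ^ 2) • Matrix.vecMulVec x x

open Finset Matrix

/-- auxiliary: the all-ones matrix -/
noncomputable def Jm (N : ℕ) : Matrix (Fin N) (Fin N) ℝ := Matrix.of fun _ _ => 1

lemma Jm_mul_Jm (N : ℕ) : Jm N * Jm N = (N : ℝ) • Jm N := by
  ext i j
  simp [Jm, Matrix.mul_apply]

lemma Jm_trace (N : ℕ) : (Jm N).trace = N := by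
  simp [Jm, Matrix.trace]

lemma mix_mul (N : ℕ) (a b c d : ℝ) :
    (a • (1 : Matrix (Fin N) (Fin N) ℝ) + b • Jm N) * (c • 1 + d • Jm N)
      = (a * c) • 1 + (a * d + b * c + N * b * d) • Jm N := by
  simp only [add_mul, mul_add, smul_mul_smul_comm, Matrix.one_mul, Matrix.mul_one, Jm_mul_Jm,
    smul_smul, smul_add]
  module

lemma card_single (N K : ℕ) (hK1 : 1 ≤ K) (i : Fin N) :
    ((Finset.univ.powersetCard K : Finset (Finset (Fin N))).filter (fun s => i ∈ s)).card
      = (N - 1).choose (K - 1) := by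
  have h : (((Finset.univ.erase i).powersetCard (K - 1) : Finset (Finset (Fin N)))).card
      = (N - 1).choose (K - 1) := by
    rw [Finset.card_powersetCard, Finset.card_erase_of_mem (Finset.mem_univ i),
      Finset.card_univ, Fintype.card_fin]
  rw [← h]
  apply Finset.card_nbij' (fun s => s.erase i) (fun t => insert i t)
  · intro s hs
    simp only [Finset.mem_coe, Finset.mem_filter, Finset.mem_powersetCard] at hs ⊢
    refine ⟨fun x hx => ?_, ?_⟩
    · simp only [Finset.mem_erase] at hx ⊢
      exact ⟨hx.1, Finset.mem_univ _⟩
    · rw [Finset.card_erase_of_mem hs.2, hs.1.2]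
  · intro t ht
    simp only [Finset.mem_coe, Finset.mem_powersetCard, Finset.mem_filter, Finset.mem_powersetCard] at ht ⊢
    have hit : i ∉ t := fun h => (Finset.mem_erase.mp (ht.1 h)).1 rfl
    refine ⟨⟨fun x _ => Finset.mem_univ x, ?_⟩, Finset.mem_insert_self i t⟩
    rw [Finset.card_insert_of_notMem hit, ht.2]
    omega
  · intro s hs
    simp only [Finset.mem_coe, Finset.mem_filter] at hs
    exact Finset.insert_erase hs.2
  · intro t ht
    simp only [Finset.mem_coe, Finset.mem_powersetCard] at ht
    have hit : i ∉ t := fun h => (Finset.mem_erase.mp (ht.1 h)).1 rfl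
    exact Finset.erase_insert hit

lemma card_pair (N K : ℕ) (hK2 : 2 ≤ K) (i j : Fin N) (hij : i ≠ j) :
    ((Finset.univ.powersetCard K : Finset (Finset (Fin N))).filter (fun s => i ∈ s ∧ j ∈ s)).card
      = (N - 2).choose (K - 2) := by
  have h : ((((Finset.univ.erase i).erase j).powersetCard (K - 2) : Finset (Finset (Fin N)))).card
      = (N - 2).choose (K - 2) := by
    rw [Finset.card_powersetCard, Finset.card_erase_of_mem
      (Finset.mem_erase.mpr ⟨hij.symm, Finset.mem_univ j⟩),
      Finset.card_erase_of_mem (Finset.mem_univ i), Finset.card_univ, Fintype.card_fin]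
    have : N - 1 - 1 = N - 2 := by omega
    rw [this]
  rw [← h]
  apply Finset.card_nbij' (fun s => (s.erase i).erase j) (fun t => insert i (insert j t))
  · intro s hs
    simp only [Finset.mem_coe, Finset.mem_filter, Finset.mem_powersetCard] at hs ⊢
    refine ⟨fun x hx => ?_, ?_⟩
    · simp only [Finset.mem_erase] at hx ⊢
      exact ⟨hx.1, hx.2.1, Finset.mem_univ _⟩
    · rw [Finset.card_erase_of_mem (Finset.mem_erase.mpr ⟨hij.symm, hs.2.2⟩),
        Finset.card_erase_of_mem hs.2.1, hs.1.2]
      omega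
  · intro t ht
    simp only [Finset.mem_coe, Finset.mem_powersetCard, Finset.mem_filter, Finset.mem_powersetCard] at ht ⊢
    have hjt : j ∉ t := fun h => by
      have := ht.1 h; simp [Finset.mem_erase] at this
    have hit : i ∉ t := fun h => by
      have := ht.1 h; simp [Finset.mem_erase] at this
    refine ⟨⟨fun x _ => Finset.mem_univ x, ?_⟩, Finset.mem_insert_self i _,
      Finset.mem_insert_of_mem (Finset.mem_insert_self j t)⟩
    rw [Finset.card_insert_of_notMem (by simp [hij, hit]),
      Finset.card_insert_of_notMem hjt, ht.2]
    omega
  · intro s hs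
    simp only [Finset.mem_coe, Finset.mem_filter, Finset.mem_powersetCard] at hs
    obtain ⟨-, his, hjs⟩ := hs
    ext x
    simp only [Finset.mem_insert, Finset.mem_erase]
    constructor
    · rintro (rfl | rfl | ⟨_, _, hx⟩) <;> assumption
    · intro hx
      by_cases h1 : x = i
      · exact Or.inl h1
      by_cases h2 : x = j
      · exact Or.inr (Or.inl h2)
      · exact Or.inr (Or.inr ⟨h2, h1, hx⟩)
  · intro t ht
    simp only [Finset.mem_coe, Finset.mem_powersetCard] at ht
    have hjt : j ∉ t := fun h => by
      have := ht.1 h; simp [Finset.mem_erase] at this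
    have hit : i ∉ t := fun h => by
      have := ht.1 h; simp [Finset.mem_erase] at this
    ext x
    simp only [Finset.mem_erase, Finset.mem_insert]
    constructor
    · rintro ⟨hxj, hxi, (rfl | rfl | hx)⟩
      · exact absurd rfl hxi
      · exact absurd rfl hxj
      · exact hx
    · intro hx
      exact ⟨fun h => hjt (h ▸ hx), fun h => hit (h ▸ hx), Or.inr (Or.inr hx)⟩

lemma infoMatrix_apply (N K : ℕ) (p : (Fin N → ℝ) → ℝ) (hp : ∀ x, p x = (N.choose K : ℝ)⁻¹)
    (i j : Fin N) :
    infoMatrix (BK N K) p i j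
      = (N.choose K : ℝ)⁻¹ / K *
        (((Finset.univ.powersetCard K : Finset (Finset (Fin N))).filter
          (fun s => i ∈ s ∧ j ∈ s)).card) := by
  unfold infoMatrix BK
  rw [Finset.sum_image]
  · rw [Matrix.sum_apply]
    have key : ∀ s ∈ (Finset.univ.powersetCard K : Finset (Finset (Fin N))),
        ((p (fun i => if i ∈ s then (1:ℝ) else 0) /
            ∑ k, (if k ∈ s then (1:ℝ) else 0) ^ 2) •
          Matrix.vecMulVec (fun i => if i ∈ s then (1:ℝ) else 0)
            (fun i => if i ∈ s then (1:ℝ) else 0)) i j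
        = (N.choose K : ℝ)⁻¹ / K * (if i ∈ s ∧ j ∈ s then 1 else 0) := by
      intro s hs
      have hsum : (∑ k, (if k ∈ s then (1:ℝ) else 0) ^ 2) = K := by
        have : ∀ k, (if k ∈ s then (1:ℝ) else 0) ^ 2 = if k ∈ s then 1 else 0 := by
          intro k; split_ifs <;> norm_num
        rw [Finset.sum_congr rfl (fun k _ => this k), Finset.sum_boole]
        simp only [Finset.mem_powersetCard] at hs
        rw [Finset.filter_mem_eq_inter, Finset.univ_inter, hs.2]
      simp only [Matrix.smul_apply, Matrix.vecMulVec_apply, hsum, hp, smul_eq_mul]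
      by_cases h1 : i ∈ s <;> by_cases h2 : j ∈ s <;> simp [h1, h2]
    rw [Finset.sum_congr rfl key, ← Finset.mul_sum, Finset.sum_boole]
  · intro s hs t ht h
    ext x
    have := congrFun h x
    by_cases hx : x ∈ s <;> by_cases hy : x ∈ t <;> simp [hx, hy] at this ⊢

lemma choose_id_nat (n k : ℕ) :
    (n + 1) * n.choose k = (k + 1) * ((n + 1).choose (k + 1)) := by
  simpa [Nat.succ_eq_add_one, Nat.mul_comm] using Nat.add_one_mul_choose_eq n k

/-- for the uniform distribution `p` on `B_K` (with `1 ≤ K < N`),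
the information matrix `M(p)` is invertible and
`trace(M(p)⁻¹) = N/K + N(N-1)²/(N-K)`. -/
theorem trace_inv_infoMatrix_uniform_BK (N K : ℕ) (hN : 2 ≤ N) (hK1 : 1 ≤ K) (hKN : K < N) :
    IsUnit (infoMatrix (BK N K) (fun _ => (N.choose K : ℝ)⁻¹)) ∧
    (infoMatrix (BK N K) (fun _ => (N.choose K : ℝ)⁻¹))⁻¹.trace
      = (N : ℝ) / K + N * ((N : ℝ) - 1) ^ 2 / ((N : ℝ) - K) := by
  have hNR : (2:ℝ) ≤ (N:ℝ) := by exact_mod_cast hN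
  have hKR : (1:ℝ) ≤ (K:ℝ) := by exact_mod_cast hK1
  have hKNR : (K:ℝ) < (N:ℝ) := by exact_mod_cast hKN
  have hN0 : (N:ℝ) ≠ 0 := by linarith
  have hN1 : (N:ℝ) - 1 ≠ 0 := by linarith
  have hK0 : (K:ℝ) ≠ 0 := by linarith
  have hNK : (N:ℝ) - (K:ℝ) ≠ 0 := by linarith
  have hC : (0:ℝ) < (N.choose K : ℝ) := by
    exact_mod_cast Nat.choose_pos (le_of_lt hKN)
  -- binomial identities over ℝ
  have hid1 : (N:ℝ) * ((N - 1).choose (K - 1) : ℝ) = K * (N.choose K : ℝ) := by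
    have h := choose_id_nat (N - 1) (K - 1)
    rw [show N - 1 + 1 = N from by omega, show K - 1 + 1 = K from by omega] at h
    exact_mod_cast congrArg (Nat.cast : ℕ → ℝ) h
  have hch1 : ((N - 1).choose (K - 1) : ℝ) = K * (N.choose K : ℝ) / N := by
    field_simp
    linarith [hid1]
  set a : ℝ := ((N:ℝ) - K) / (N * ((N:ℝ) - 1)) with ha_def
  set b : ℝ := ((K:ℝ) - 1) / (N * ((N:ℝ) - 1)) with hb_def
  set c : ℝ := (N:ℝ) * ((N:ℝ) - 1) / ((N:ℝ) - K) with hc_def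
  set d : ℝ := 1 / K - ((N:ℝ) - 1) / ((N:ℝ) - K) with hd_def
  -- the structure of the information matrix
  have hM : infoMatrix (BK N K) (fun _ => (N.choose K : ℝ)⁻¹)
      = a • (1 : Matrix (Fin N) (Fin N) ℝ) + b • Jm N := by
    ext i j
    rw [infoMatrix_apply N K _ (fun _ => rfl) i j]
    by_cases hij : i = j
    · subst hij
      simp only [and_self]
      rw [card_single N K hK1 i]
      simp only [Matrix.add_apply, Matrix.smul_apply, Matrix.one_apply_eq, Jm,
        Matrix.of_apply, smul_eq_mul, mul_one]
      rw [hch1, ha_def, hb_def]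
      field_simp
      ring
    · simp only [Matrix.add_apply, Matrix.smul_apply, Matrix.one_apply_ne hij, Jm,
        Matrix.of_apply, smul_eq_mul, mul_one, mul_zero, zero_add]
      by_cases hK2 : 2 ≤ K
      · rw [card_pair N K hK2 i j hij]
        have hid2 : ((N:ℝ) - 1) * ((N - 2).choose (K - 2) : ℝ)
            = ((K:ℝ) - 1) * ((N - 1).choose (K - 1) : ℝ) := by
          have h := choose_id_nat (N - 2) (K - 2)
          rw [show N - 2 + 1 = N - 1 from by omega,
            show K - 2 + 1 = K - 1 from by omega] at h
          have h' := congrArg (Nat.cast : ℕ → ℝ) h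
          rw [Nat.cast_mul, Nat.cast_mul, Nat.cast_sub (show 1 ≤ N from by omega),
            Nat.cast_sub (show 1 ≤ K from by omega), Nat.cast_one] at h'
          exact h'
        have hch2 : ((N - 2).choose (K - 2) : ℝ)
            = ((K:ℝ) - 1) * K * (N.choose K : ℝ) / (N * ((N:ℝ) - 1)) := by
          rw [hch1] at hid2
          field_simp at hid2 ⊢
          linarith [hid2]
        rw [hch2, hb_def]
        field_simp
      · -- K = 1 : the filter is empty
        have hK1' : K = 1 := by omega
        have hempty : ((Finset.univ.powersetCard K : Finset (Finset (Fin N))).filter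
            (fun s => i ∈ s ∧ j ∈ s)) = ∅ := by
          rw [Finset.eq_empty_iff_forall_notMem]
          intro s hs
          simp only [Finset.mem_filter, Finset.mem_powersetCard] at hs
          obtain ⟨⟨-, hcard⟩, his, hjs⟩ := hs
          have hsub : ({i, j} : Finset (Fin N)) ⊆ s := by
            intro x hx
            simp only [Finset.mem_insert, Finset.mem_singleton] at hx
            rcases hx with rfl | rfl <;> assumption
          have := Finset.card_le_card hsub
          rw [Finset.card_insert_of_notMem (by simp [hij]), Finset.card_singleton, hcard,
            hK1'] at this
          omega
        rw [hempty]
        simp only [Finset.card_empty, Nat.cast_zero, mul_zero, hb_def]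
        have : (K:ℝ) = 1 := by exact_mod_cast hK1'
        rw [this]
        ring
  -- the explicit inverse
  have h1 : a * c = 1 := by
    rw [ha_def, hc_def]
    field_simp
  have h2 : a * d + b * c + N * b * d = 0 := by
    rw [ha_def, hb_def, hc_def, hd_def]
    field_simp
    ring
  have hMinv : infoMatrix (BK N K) (fun _ => (N.choose K : ℝ)⁻¹) *
      (c • (1 : Matrix (Fin N) (Fin N) ℝ) + d • Jm N) = 1 := by
    rw [hM, mix_mul, h1, h2]
    simp
  constructor
  · exact (Matrix.isUnit_iff_isUnit_det _).mpr (Matrix.isUnit_det_of_right_inverse hMinv)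
  · rw [Matrix.inv_eq_right_inv hMinv]
    rw [Matrix.trace_add, Matrix.trace_smul, Matrix.trace_smul, Matrix.trace_one, Jm_trace,
      hc_def, hd_def]
    simp only [Fintype.card_fin, smul_eq_mul]
    field_simp
    ring
end

section
/- Let N ≥ 2 and 1 ≤ K < N be integers. For every probability distribution p on B_K such that the information matrix M(p) is invertible, trace(M(p)⁻¹) ≥ N/K + N·(N−1)²/(N−K), and the uniform distribution on B_K attains this bound; that is, the uniform distribution minimizes trace(M(p)⁻¹) over all distributions on B_K. -/
namespace UOPT

open Matrix Finset

variable {n : Type*} [Fintype n] [DecidableEq n]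


variable {n : Type*} [Fintype n] [DecidableEq n]

lemma psd_vecMulVec (x : n → ℝ) : (Matrix.vecMulVec x x).PosSemidef := by
  rw [Matrix.posSemidef_iff_dotProduct_mulVec]
  constructor
  · ext i j
    simp [Matrix.conjTranspose_apply, Matrix.vecMulVec_apply, mul_comm]
  · intro v
    have hv : Matrix.vecMulVec x x *ᵥ v = (x ⬝ᵥ v) • x := by
      ext i
      simp [Matrix.mulVec, Matrix.vecMulVec_apply, dotProduct, Finset.sum_mul,
        Finset.mul_sum, mul_comm, mul_assoc, mul_left_comm]
    rw [hv]
    simp only [star_trivial, dotProduct_smul, smul_eq_mul]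
    rw [dotProduct_comm]
    exact mul_self_nonneg _

lemma psd_smul {M : Matrix n n ℝ} (hM : M.PosSemidef) {c : ℝ} (hc : 0 ≤ c) :
    (c • M).PosSemidef := by
  rw [Matrix.posSemidef_iff_dotProduct_mulVec]
  constructor
  · ext i j
    simp only [Matrix.conjTranspose_apply, Matrix.smul_apply, star_trivial, smul_eq_mul]
    rw [← hM.1.apply i j]
    rfl
  · intro v
    rw [Matrix.smul_mulVec, dotProduct_smul, smul_eq_mul]
    exact mul_nonneg hc (hM.dotProduct_mulVec_nonneg v)

lemma psd_sum {ι : Type*} (t : Finset ι) (g : ι → Matrix n n ℝ)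
    (h : ∀ i ∈ t, (g i).PosSemidef) : (∑ i ∈ t, g i).PosSemidef :=
  Finset.sum_induction g (·.PosSemidef) (fun _ _ ha hb => ha.add hb) .zero h

lemma psd_trace_nonneg {M : Matrix n n ℝ} (h : M.PosSemidef) : 0 ≤ M.trace := by
  rw [Matrix.trace]
  refine Finset.sum_nonneg fun i _ => ?_
  have := h.dotProduct_mulVec_nonneg (Pi.single i 1)
  simpa [Matrix.mulVec_single, Matrix.diag] using this

lemma trace_inv_ge (M B : Matrix n n ℝ) (hpsd : M.PosSemidef) (hB : Bᴴ = B)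
    (hu : IsUnit M) : 2 * B.trace - (M * (B * B)).trace ≤ M⁻¹.trace := by
  have hdet : IsUnit M.det := (Matrix.isUnit_iff_isUnit_det M).mp hu
  have h1 : M⁻¹ * M = 1 := Matrix.nonsing_inv_mul M hdet
  have h2 : M * M⁻¹ = 1 := Matrix.mul_nonsing_inv M hdet
  set C : Matrix n n ℝ := 1 - M * B with hC
  have hpsd2 : (Cᴴ * M⁻¹ * C).PosSemidef := hpsd.inv.conjTranspose_mul_mul_same C
  have ht : 0 ≤ (Cᴴ * M⁻¹ * C).trace := psd_trace_nonneg hpsd2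
  have hCH : Cᴴ = 1 - B * M := by
    rw [hC, conjTranspose_sub, conjTranspose_mul, conjTranspose_one, hB, hpsd.1.eq]
  have e1 : (1 - B * M) * M⁻¹ = M⁻¹ - B := by
    rw [Matrix.sub_mul, Matrix.one_mul, Matrix.mul_assoc, h2, Matrix.mul_one]
  have e2 : Cᴴ * M⁻¹ * C = M⁻¹ - B - B + B * (M * B) := by
    rw [hCH, e1, hC, Matrix.sub_mul, Matrix.mul_sub M⁻¹, Matrix.mul_one, Matrix.mul_sub B,
      Matrix.mul_one, ← Matrix.mul_assoc M⁻¹, h1, Matrix.one_mul]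
    abel
  rw [e2] at ht
  have e3 : (B * (M * B)).trace = (M * (B * B)).trace := by
    rw [Matrix.trace_mul_comm, Matrix.mul_assoc]
  simp only [Matrix.trace_add, Matrix.trace_sub, e3] at ht
  linarith

def ind (N : ℕ) (s : Finset (Fin N)) : Fin N → ℝ := fun i => if i ∈ s then 1 else 0

lemma ind_inj (N : ℕ) : Function.Injective (ind N) := by
  intro s t h
  ext i
  have h2 := congrFun h i
  simp only [ind] at h2
  by_cases hs : i ∈ s <;> by_cases ht : i ∈ t <;> simp [hs, ht] at h2 ⊢

lemma sum_BK {N K : ℕ} {M : Type*} [AddCommMonoid M] (g : (Fin N → ℝ) → M) :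
    ∑ x ∈ BK N K, g x = ∑ s ∈ Finset.univ.powersetCard K, g (ind N s) :=
  Finset.sum_image (fun _ _ _ _ h => ind_inj N h)

lemma sum_ind {N : ℕ} (s : Finset (Fin N)) : ∑ i, ind N s i = (s.card : ℝ) := by
  rw [show (fun i => ind N s i) = fun i => if i ∈ s then (1:ℝ) else 0 from rfl,
    Finset.sum_ite_mem, Finset.univ_inter, Finset.sum_const, nsmul_eq_mul, mul_one]

lemma sum_ind_sq {N : ℕ} (s : Finset (Fin N)) : ∑ i, ind N s i ^ 2 = (s.card : ℝ) := by
  rw [← sum_ind s]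
  refine Finset.sum_congr rfl fun i _ => ?_
  simp only [ind]
  split <;> norm_num

lemma ind_mul {N : ℕ} (s : Finset (Fin N)) (i j : Fin N) :
    ind N s i * ind N s j = if i ∈ s ∧ j ∈ s then 1 else 0 := by
  simp only [ind]
  by_cases hi : i ∈ s <;> by_cases hj : j ∈ s <;> simp [hi, hj]

/-- number of `K`-subsets containing both `i` and `j`, as a real. -/
def cnt (N K : ℕ) (i j : Fin N) : ℝ :=
  (((Finset.univ.powersetCard K : Finset (Finset (Fin N))).filter
    fun s => i ∈ s ∧ j ∈ s).card : ℝ)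

lemma cnt_perm (N K : ℕ) (σ : Equiv.Perm (Fin N)) (i j : Fin N) :
    cnt N K i j = cnt N K (σ i) (σ j) := by
  unfold cnt
  congr 1
  refine Finset.card_bij' (fun s _ => s.image σ) (fun t _ => t.image σ.symm)
    ?_ ?_ ?_ ?_
  · intro s hs
    simp only [Finset.mem_filter, Finset.mem_powersetCard_univ] at hs ⊢
    refine ⟨?_, Finset.mem_image_of_mem _ hs.2.1, Finset.mem_image_of_mem _ hs.2.2⟩
    rw [Finset.card_image_of_injective _ σ.injective, hs.1]
  · intro t ht
    simp only [Finset.mem_filter, Finset.mem_powersetCard_univ, Finset.mem_image] at ht ⊢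
    refine ⟨?_, ⟨σ i, ht.2.1, Equiv.symm_apply_apply σ i⟩,
      ⟨σ j, ht.2.2, Equiv.symm_apply_apply σ j⟩⟩
    rw [Finset.card_image_of_injective _ σ.symm.injective, ht.1]
  · intro s _
    simp [Finset.image_image]
  · intro t _
    simp [Finset.image_image]

lemma cnt_diag {N : ℕ} (K : ℕ) {i0 : Fin N} (i : Fin N) : cnt N K i i = cnt N K i0 i0 := by
  have h := cnt_perm N K (Equiv.swap i i0) i i
  simpa [Equiv.swap_apply_left] using h

lemma cnt_off {N : ℕ} (K : ℕ) {i0 j0 i j : Fin N} (h0 : i0 ≠ j0) (hij : i ≠ j) :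
    cnt N K i j = cnt N K i0 j0 := by
  set σ₁ := Equiv.swap i i0 with hσ₁
  have hji : σ₁ j ≠ i0 := by
    rw [show i0 = σ₁ i from (Equiv.swap_apply_left i i0).symm]
    exact fun h => hij (σ₁.injective h).symm
  set σ₂ := Equiv.swap (σ₁ j) j0 with hσ₂
  have h := cnt_perm N K (σ₁.trans σ₂) i j
  have hi : (σ₁.trans σ₂) i = i0 := by
    simp only [Equiv.trans_apply, hσ₁, Equiv.swap_apply_left, hσ₂]
    exact Equiv.swap_apply_of_ne_of_ne (Ne.symm hji) h0
  have hj : (σ₁.trans σ₂) j = j0 := by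
    simp only [Equiv.trans_apply, hσ₂, Equiv.swap_apply_left]
  rw [h, hi, hj]

lemma sum_cnt_boole {N K : ℕ} (i j : Fin N) :
    cnt N K i j = ∑ s ∈ Finset.univ.powersetCard K,
      (if i ∈ s ∧ j ∈ s then (1:ℝ) else 0) := by
  rw [Finset.sum_boole, cnt]

lemma sum_cnt_diag (N K : ℕ) :
    ∑ i, cnt N K i i = (K : ℝ) * (N.choose K : ℝ) := by
  have h1 : ∀ i : Fin N, cnt N K i i
      = ∑ s ∈ Finset.univ.powersetCard K, (if i ∈ s then (1:ℝ) else 0) := by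
    intro i
    rw [sum_cnt_boole]
    exact Finset.sum_congr rfl fun s _ => by simp
  calc ∑ i, cnt N K i i
      = ∑ s ∈ Finset.univ.powersetCard K, ∑ i : Fin N, (if i ∈ s then (1:ℝ) else 0) := by
        rw [← Finset.sum_comm]
        exact Finset.sum_congr rfl fun i _ => h1 i
    _ = ∑ s ∈ Finset.univ.powersetCard K, (K : ℝ) := by
        refine Finset.sum_congr rfl fun s hs => ?_
        rw [Finset.sum_ite_mem, Finset.univ_inter, Finset.sum_const, nsmul_eq_mul, mul_one,
          Finset.mem_powersetCard_univ.mp hs]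
    _ = (K : ℝ) * (N.choose K : ℝ) := by
        rw [Finset.sum_const, nsmul_eq_mul, Finset.card_powersetCard, Finset.card_univ,
          Fintype.card_fin, mul_comm]

lemma row_cnt (N K : ℕ) (i : Fin N) :
    ∑ j, cnt N K i j = (K : ℝ) * cnt N K i i := by
  have h1 : ∀ s ∈ Finset.univ.powersetCard K,
      ∑ j : Fin N, (if i ∈ s ∧ j ∈ s then (1:ℝ) else 0)
        = (K : ℝ) * (if i ∈ s then (1:ℝ) else 0) := by
    intro s hs
    by_cases hi : i ∈ s
    · simp only [hi, true_and, if_true, mul_one]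
      rw [Finset.sum_ite_mem, Finset.univ_inter, Finset.sum_const, nsmul_eq_mul, mul_one,
        Finset.mem_powersetCard_univ.mp hs]
    · simp [hi]
  calc ∑ j, cnt N K i j
      = ∑ s ∈ Finset.univ.powersetCard K,
          ∑ j : Fin N, (if i ∈ s ∧ j ∈ s then (1:ℝ) else 0) := by
        rw [← Finset.sum_comm]
        exact Finset.sum_congr rfl fun j _ => sum_cnt_boole i j
    _ = ∑ s ∈ Finset.univ.powersetCard K, (K : ℝ) * (if i ∈ s then (1:ℝ) else 0) :=
        Finset.sum_congr rfl h1
    _ = (K : ℝ) * cnt N K i i := by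
        rw [← Finset.mul_sum]
        congr 1
        rw [sum_cnt_boole]
        exact Finset.sum_congr rfl fun s _ => by simp

lemma unif_apply (N K : ℕ) (hK : K ≠ 0) (i j : Fin N) :
    infoMatrix (BK N K) (fun _ => ((N.choose K : ℝ))⁻¹) i j
      = (N.choose K : ℝ)⁻¹ / (K : ℝ) * cnt N K i j := by
  have : infoMatrix (BK N K) (fun _ => ((N.choose K : ℝ))⁻¹) i j
      = ∑ x ∈ BK N K, ((N.choose K : ℝ))⁻¹ / (∑ l, x l ^ 2) * (x i * x j) := by
    simp [infoMatrix, Matrix.sum_apply, Matrix.vecMulVec_apply]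
  rw [this, sum_BK (g := fun x => ((N.choose K : ℝ))⁻¹ / (∑ l, x l ^ 2) * (x i * x j))]
  rw [sum_cnt_boole, Finset.mul_sum]
  refine Finset.sum_congr rfl fun s hs => ?_
  rw [sum_ind_sq, Finset.mem_powersetCard_univ.mp hs, ind_mul]

def Jmat (N : ℕ) : Matrix (Fin N) (Fin N) ℝ := Matrix.of fun _ _ => 1

lemma infoM_eq (N K : ℕ) (p : (Fin N → ℝ) → ℝ) :
    infoMatrix (BK N K) p = ∑ s ∈ Finset.univ.powersetCard K,
      (p (ind N s) / ∑ i, ind N s i ^ 2) • Matrix.vecMulVec (ind N s) (ind N s) :=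
  sum_BK (g := fun x => (p x / ∑ i, x i ^ 2) • Matrix.vecMulVec x x)

lemma trace_vecMulVec {N : ℕ} (x : Fin N → ℝ) :
    (Matrix.vecMulVec x x).trace = ∑ i, x i ^ 2 := by
  simp [Matrix.trace, Matrix.diag, Matrix.vecMulVec_apply, sq]

lemma infoM_trace (N K : ℕ) (hK : K ≠ 0) (p : (Fin N → ℝ) → ℝ) :
    (infoMatrix (BK N K) p).trace = ∑ s ∈ Finset.univ.powersetCard K, p (ind N s) := by
  have hKne : (K : ℝ) ≠ 0 := Nat.cast_ne_zero.mpr hK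
  rw [infoM_eq, Matrix.trace_sum]
  refine Finset.sum_congr rfl fun s hs => ?_
  rw [Matrix.trace_smul, trace_vecMulVec, sum_ind_sq, Finset.mem_powersetCard_univ.mp hs,
    smul_eq_mul]
  field_simp

lemma infoM_mulJ_trace (N K : ℕ) (hK : K ≠ 0) (p : (Fin N → ℝ) → ℝ) :
    (infoMatrix (BK N K) p * Jmat N).trace
      = (K : ℝ) * ∑ s ∈ Finset.univ.powersetCard K, p (ind N s) := by
  have hKne : (K : ℝ) ≠ 0 := Nat.cast_ne_zero.mpr hK
  rw [infoM_eq, Finset.sum_mul, Matrix.trace_sum, Finset.mul_sum]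
  refine Finset.sum_congr rfl fun s hs => ?_
  rw [Matrix.smul_mul, Matrix.trace_smul]
  have h1 : (Matrix.vecMulVec (ind N s) (ind N s) * Jmat N).trace
      = (∑ i, ind N s i) * (∑ i, ind N s i) := by
    simp only [Matrix.trace, Matrix.diag, Matrix.mul_apply, Matrix.vecMulVec_apply, Jmat,
      Matrix.of_apply, mul_one]
    rw [Finset.sum_mul]
    exact Finset.sum_congr rfl fun i _ => by rw [Finset.mul_sum]
  rw [h1, sum_ind, sum_ind_sq, Finset.mem_powersetCard_univ.mp hs, smul_eq_mul]
  field_simp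

lemma infoM_psd (N K : ℕ) (p : (Fin N → ℝ) → ℝ) (hp : ∀ x ∈ BK N K, 0 ≤ p x) :
    (infoMatrix (BK N K) p).PosSemidef := by
  unfold infoMatrix
  refine psd_sum _ _ fun x hx => ?_
  refine psd_smul (psd_vecMulVec x) ?_
  exact div_nonneg (hp x hx) (Finset.sum_nonneg fun i _ => sq_nonneg _)

end UOPT

open UOPT Matrix Finset in
/-- every probability distribution `p` on `B_K` with invertible
information matrix satisfies `trace(M(p)⁻¹) ≥ N/K + N(N-1)²/(N-K)`, and the
uniform distribution attains this bound. -/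
theorem uniform_optimal_on_BK (N K : ℕ) (hN : 2 ≤ N) (hK1 : 1 ≤ K) (hKN : K < N) :
    (∀ p : (Fin N → ℝ) → ℝ, (∀ x ∈ BK N K, 0 ≤ p x) → (∑ x ∈ BK N K, p x) = 1 →
      IsUnit (infoMatrix (BK N K) p) →
      (N : ℝ) / K + N * ((N : ℝ) - 1) ^ 2 / ((N : ℝ) - K)
        ≤ (infoMatrix (BK N K) p)⁻¹.trace) ∧
    (infoMatrix (BK N K) (fun _ => (N.choose K : ℝ)⁻¹))⁻¹.trace
      = (N : ℝ) / K + N * ((N : ℝ) - 1) ^ 2 / ((N : ℝ) - K) := by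


  classical
  have hK0 : K ≠ 0 := by omega
  have hC0 : (0:ℝ) < (N.choose K : ℝ) := by exact_mod_cast Nat.choose_pos hKN.le
  have hCne : (N.choose K : ℝ) ≠ 0 := ne_of_gt hC0
  have hKr : (0:ℝ) < (K:ℝ) := by exact_mod_cast hK1
  have hKne : (K:ℝ) ≠ 0 := ne_of_gt hKr
  have hNr : (0:ℝ) < (N:ℝ) := by exact_mod_cast (by omega : 0 < N)
  have hNne : (N:ℝ) ≠ 0 := ne_of_gt hNr
  have hKNr : (K:ℝ) < (N:ℝ) := by exact_mod_cast hKN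
  have hNK : (0:ℝ) < (N:ℝ) - (K:ℝ) := by linarith
  have hNKne : (N:ℝ) - (K:ℝ) ≠ 0 := ne_of_gt hNK
  have hN1 : (0:ℝ) < (N:ℝ) - 1 := by
    have : (2:ℝ) ≤ (N:ℝ) := by exact_mod_cast hN
    linarith
  have hN1ne : (N:ℝ) - 1 ≠ 0 := ne_of_gt hN1
  set c : ℝ := (N:ℝ) * ((N:ℝ) - 1) / ((N:ℝ) - (K:ℝ)) with hc
  set d : ℝ := (N:ℝ) * (1 - (K:ℝ)) / ((K:ℝ) * ((N:ℝ) - (K:ℝ))) with hd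
  set B : Matrix (Fin N) (Fin N) ℝ := c • 1 + d • Jmat N with hB
  have hJH : (Jmat N)ᴴ = Jmat N := by
    ext i j
    simp [Jmat, Matrix.conjTranspose_apply]
  have hBH : Bᴴ = B := by
    rw [hB, conjTranspose_add, conjTranspose_smul, conjTranspose_smul, conjTranspose_one,
      hJH, star_trivial, star_trivial]
  have hJtr : (Jmat N).trace = (N:ℝ) := by
    simp [Jmat, Matrix.trace, Matrix.diag]
  have hBtr : B.trace = c * N + d * N := by
    rw [hB, Matrix.trace_add, Matrix.trace_smul, Matrix.trace_smul, Matrix.trace_one, hJtr]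
    simp [Fintype.card_fin]
  have hJJ : Jmat N * Jmat N = (N:ℝ) • Jmat N := by
    ext i j
    simp [Jmat, Matrix.mul_apply, Finset.sum_const, Finset.card_univ]
  have hBB : B * B = (c*c) • (1 : Matrix (Fin N) (Fin N) ℝ) + (2*c*d + N*d*d) • Jmat N := by
    rw [hB]
    simp only [Matrix.add_mul, Matrix.mul_add, Matrix.smul_mul, Matrix.mul_smul,
      Matrix.one_mul, Matrix.mul_one, hJJ, smul_smul]
    module
  constructor
  · -- inequality part
    intro p hp hsum hunit
    set M := infoMatrix (BK N K) p with hM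
    have hsum' : ∑ s ∈ Finset.univ.powersetCard K, p (ind N s) = 1 := by
      rw [← sum_BK (g := p)]; exact hsum
    have htr : M.trace = 1 := by rw [hM, infoM_trace N K hK0, hsum']
    have htrJ : (M * Jmat N).trace = (K:ℝ) := by
      rw [hM, infoM_mulJ_trace N K hK0, hsum', mul_one]
    have key := trace_inv_ge M B (infoM_psd N K p hp) hBH hunit
    have hMBB : (M * (B * B)).trace = c*c + (2*c*d + N*d*d) * (K:ℝ) := by
      rw [hBB, Matrix.mul_add, Matrix.mul_smul, Matrix.mul_smul, Matrix.mul_one,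
        Matrix.trace_add, Matrix.trace_smul, Matrix.trace_smul, htr, htrJ]
      simp [smul_eq_mul]
    have hfinal : 2 * B.trace - (M * (B * B)).trace
        = (N : ℝ) / K + N * ((N : ℝ) - 1) ^ 2 / ((N : ℝ) - K) := by
      rw [hBtr, hMBB, hc, hd]
      field_simp
      ring
    linarith
  · -- equality part
    set i0 : Fin N := ⟨0, by omega⟩ with hi0
    set j0 : Fin N := ⟨1, by omega⟩ with hj0
    have h01 : i0 ≠ j0 := by simp [hi0, hj0, Fin.ext_iff]
    set C : ℝ := (N.choose K : ℝ) with hCdef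
    set D : ℝ := cnt N K i0 i0 with hDdef
    set E : ℝ := cnt N K i0 j0 with hEdef
    have hDsum : (N:ℝ) * D = (K:ℝ) * C := by
      have h := sum_cnt_diag N K
      rw [Finset.sum_congr rfl (fun i _ => cnt_diag (i0 := i0) K i)] at h
      rw [Finset.sum_const, Finset.card_univ, Fintype.card_fin, nsmul_eq_mul] at h
      exact h
    have hrow : ∑ j, cnt N K i0 j = (K:ℝ) * D := row_cnt N K i0
    have hEsum : D + ((N:ℝ) - 1) * E = (K:ℝ) * D := by
      have hsplit := Finset.add_sum_erase Finset.univ (fun j => cnt N K i0 j)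
        (Finset.mem_univ i0)
      have herase : ∑ j ∈ Finset.univ.erase i0, cnt N K i0 j = ((N:ℝ) - 1) * E := by
        rw [Finset.sum_congr rfl
          (fun j hj => cnt_off K h01 (Ne.symm (Finset.ne_of_mem_erase hj)))]
        rw [Finset.sum_const, Finset.card_erase_of_mem (Finset.mem_univ i0),
          Finset.card_univ, Fintype.card_fin, nsmul_eq_mul]
        rw [Nat.cast_sub (by omega : 1 ≤ N)]
        norm_num
        exact Or.inl rfl
      rw [herase] at hsplit
      rw [hrow] at hsplit
      linarith
    have hD : D = (K:ℝ) * C / (N:ℝ) := by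
      rw [eq_div_iff hNne]; linarith
    have hE : E = ((K:ℝ) - 1) * (K:ℝ) * C / ((N:ℝ) * ((N:ℝ) - 1)) := by
      have h2 : ((N:ℝ) - 1) * E = ((K:ℝ) - 1) * D := by linarith
      rw [eq_div_iff (by positivity)]
      calc E * ((N:ℝ) * ((N:ℝ) - 1)) = (((N:ℝ) - 1) * E) * N := by ring
        _ = (((K:ℝ) - 1) * D) * N := by rw [h2]
        _ = ((K:ℝ) - 1) * ((N:ℝ) * D) := by ring
        _ = ((K:ℝ) - 1) * ((K:ℝ) * C) := by rw [hDsum]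
        _ = ((K:ℝ) - 1) * (K:ℝ) * C := by ring
    have hMB : infoMatrix (BK N K) (fun _ => C⁻¹) * B = 1 := by
      ext i j
      have hrowM : ∑ k, infoMatrix (BK N K) (fun _ => C⁻¹) i k = C⁻¹ / K * ((K:ℝ) * D) := by
        rw [Finset.sum_congr rfl (fun k _ => unif_apply N K hK0 i k), ← Finset.mul_sum,
          row_cnt, cnt_diag (i0 := i0) K i]
      have hentry := unif_apply N K hK0 i j
      rw [Matrix.mul_apply]
      have hBapp : ∀ k, B k j = c * (if k = j then (1:ℝ) else 0) + d := by
        intro k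
        simp [hB, Jmat, Matrix.one_apply]
      calc ∑ k, infoMatrix (BK N K) (fun _ => C⁻¹) i k * B k j
          = ∑ k, ((if k = j then c * infoMatrix (BK N K) (fun _ => C⁻¹) i k else 0)
              + d * infoMatrix (BK N K) (fun _ => C⁻¹) i k) := by
            refine Finset.sum_congr rfl fun k _ => ?_
            rw [hBapp k]
            split <;> ring
        _ = c * infoMatrix (BK N K) (fun _ => C⁻¹) i j + d * (C⁻¹ / K * ((K:ℝ) * D)) := by
            rw [Finset.sum_add_distrib, Finset.sum_ite_eq' Finset.univ j, ← Finset.mul_sum,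
              hrowM]
            simp
        _ = (1 : Matrix (Fin N) (Fin N) ℝ) i j := by
            rw [hentry]
            by_cases hij : i = j
            · subst hij
              rw [cnt_diag (i0 := i0) K i, ← hDdef, Matrix.one_apply_eq, hD, hc, hd]
              rw [← hCdef]
              field_simp
              ring
            · rw [cnt_off K h01 hij, ← hEdef, Matrix.one_apply_ne hij, hE, hD, hc, hd]
              rw [← hCdef]
              field_simp
              ring
    rw [Matrix.inv_eq_right_inv hMB, hBtr, hc, hd]
    field_simp
    ring
end

section
/- Let N ≥ 2 and 1 ≤ K < N be integers, and let X be a nonempty finite set of binary vectors in {0,1}^N each having at least K ones (i.e., X ⊆ ∪_{i=K}^{N} B_i). Then for every probability distribution p on X such that the information matrix M(p) is invertible, trace(M(p)⁻¹) ≥ N/K + N·(N−1)²/(N−K). -/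
section Auxiliary

open Matrix

/-! ### Purely numerical lemmas -/

private theorem aux_mono_step (n k b : ℝ) (hn : 2 ≤ n) (hk : 1 ≤ k) (hkb : k ≤ b) (hbn : b < n) :
    n/k + n*(n-1)^2/(n-k) ≤ n/b + n*(n-1)^2/(n-b) := by
  have hb1 : 1 ≤ b := hk.trans hkb
  have hb0 : 0 < b := by linarith
  have hk0 : 0 < k := by linarith
  have hnb : 0 < n - b := by linarith
  have hnk : 0 < n - k := by linarith
  have h3 : (n-b)*(n-k) ≤ ((n-1)*b)*((n-1)*k) := by
    apply mul_le_mul (by nlinarith) (by nlinarith) hnk.le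
    exact mul_nonneg (by linarith) hb0.le
  rw [div_add_div _ _ (ne_of_gt hk0) (ne_of_gt hnk), div_add_div _ _ (ne_of_gt hb0) (ne_of_gt hnb),
    div_le_div_iff₀ (by positivity) (by positivity)]
  nlinarith [mul_nonneg (sub_nonneg.2 hkb) (sub_nonneg.2 h3), hn]

private theorem aux_engel_form {N : ℕ} (w lam : Fin N → ℝ) (hw : ∀ j, 0 ≤ w j)
    (hl : ∀ j, 0 < lam j) :
    (∑ j, w j)^2 ≤ (∑ j, w j * lam j) * (∑ j, w j / lam j) := by
  apply Finset.sum_sq_le_sum_mul_sum_of_sq_eq_mul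
  · exact fun i _ => mul_nonneg (hw i) (hl i).le
  · exact fun i _ => div_nonneg (hw i) (hl i).le
  · intro i _
    rw [div_eq_mul_inv, show w i * lam i * (w i * (lam i)⁻¹) = w i * w i * (lam i * (lam i)⁻¹) by
      ring, mul_inv_cancel₀ (hl i).ne', mul_one, sq]

private theorem aux_key_ineq (N K : ℕ) (hN : 2 ≤ N) (hK1 : 1 ≤ K) (hKN : K < N)
    (lam c : Fin N → ℝ) (hl : ∀ j, 0 < lam j) (hsum : ∑ j, lam j = 1)
    (hc : ∑ j, (c j)^2 = N) (hβ : (K:ℝ) ≤ ∑ j, lam j * (c j)^2) :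
    (N:ℝ)/K + N*((N:ℝ)-1)^2/((N:ℝ)-K) ≤ ∑ j, (lam j)⁻¹ := by
  set n : ℝ := (N : ℝ) with hn
  have hn2 : (2:ℝ) ≤ n := by rw [hn]; exact_mod_cast hN
  have hk1 : (1:ℝ) ≤ (K:ℝ) := by exact_mod_cast hK1
  have hkn : (K:ℝ) < n := by rw [hn]; exact_mod_cast hKN
  set β : ℝ := ∑ j, lam j * (c j)^2 with hβdef
  have hβ1 : (1:ℝ) ≤ β := hk1.trans hβ
  have hβ0 : (0:ℝ) < β := by linarith
  have hcle : ∀ j, (c j)^2 ≤ n := by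
    intro j
    rw [← hc]
    exact Finset.single_le_sum (fun i _ => sq_nonneg (c i)) (Finset.mem_univ j)
  have hβn : β < n := by
    have hex : ∃ j, (c j)^2 < n := by
      by_contra h
      push_neg at h
      have hall : ∀ j, (c j)^2 = n := fun j => le_antisymm (hcle j) (h j)
      have hsum2 : n = N * n := by
        calc n = ∑ j : Fin N, (c j)^2 := hc.symm
          _ = ∑ _j : Fin N, n := Finset.sum_congr rfl (fun j _ => hall j)
          _ = N * n := by rw [Finset.sum_const, Finset.card_univ, Fintype.card_fin, nsmul_eq_mul]
      nlinarith
    obtain ⟨j0, hj0⟩ := hex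
    have : 0 < ∑ j, lam j * (n - (c j)^2) := by
      apply Finset.sum_pos' (fun i _ => mul_nonneg (hl i).le (by linarith [hcle i]))
      exact ⟨j0, Finset.mem_univ j0, mul_pos (hl j0) (by linarith)⟩
    have hexp : ∑ j, lam j * (n - (c j)^2) = n - β := by
      simp only [mul_sub, Finset.sum_sub_distrib, ← Finset.sum_mul, hsum]
      ring
    linarith [hexp ▸ this]
  have hnβ : 0 < n - β := by linarith
  have S1def : (0:ℝ) ≤ ∑ j, (c j)^2 / lam j :=
    Finset.sum_nonneg fun i _ => div_nonneg (sq_nonneg _) (hl i).le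
  have E1 : n^2 ≤ β * ∑ j, (c j)^2 / lam j := by
    have := aux_engel_form (fun j => (c j)^2) lam (fun j => sq_nonneg _) hl
    simp only [hc] at this
    calc n^2 ≤ (∑ j, (c j)^2 * lam j) * (∑ j, (c j)^2 / lam j) := this
      _ = β * ∑ j, (c j)^2 / lam j := by
          rw [hβdef]; congr 1; exact Finset.sum_congr rfl fun i _ => mul_comm _ _
  have E2 : (n * (n-1))^2 ≤ (n - β) * ∑ j, (n - (c j)^2) / lam j := by
    have := aux_engel_form (fun j => n - (c j)^2) lam
      (fun j => by simpa using sub_nonneg.2 (hcle j)) hl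
    have hw1 : ∑ j, (n - (c j)^2) = n * (n - 1) := by
      rw [Finset.sum_sub_distrib, hc, Finset.sum_const, Finset.card_univ, Fintype.card_fin,
        nsmul_eq_mul]
      ring
    have hw2 : ∑ j, (n - (c j)^2) * lam j = n - β := by
      simp only [sub_mul, Finset.sum_sub_distrib, ← Finset.mul_sum, hsum, hβdef]
      rw [mul_one]
      congr 1
      exact Finset.sum_congr rfl fun i _ => mul_comm _ _
    rw [hw1, hw2] at this
    exact this
  have hsplit : n * ∑ j, (lam j)⁻¹ = (∑ j, (c j)^2 / lam j) + ∑ j, (n - (c j)^2) / lam j := by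
    rw [← Finset.sum_add_distrib, Finset.mul_sum]
    apply Finset.sum_congr rfl
    intro i _
    rw [← add_div]
    field_simp
    ring
  have h1 : n^2/β ≤ ∑ j, (c j)^2 / lam j := by
    rw [div_le_iff₀ hβ0]; linarith [E1]
  have h2 : (n*(n-1))^2/(n-β) ≤ ∑ j, (n - (c j)^2) / lam j := by
    rw [div_le_iff₀ hnβ]; linarith [E2]
  have hmono : n/(K:ℝ) + n*(n-1)^2/(n-(K:ℝ)) ≤ n/β + n*(n-1)^2/(n-β) :=
    aux_mono_step n K β hn2 hk1 hβ hβn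
  have hn0 : (0:ℝ) < n := by linarith
  have : n * (n/β + n*(n-1)^2/(n-β)) ≤ n * ∑ j, (lam j)⁻¹ := by
    rw [hsplit, mul_add]
    have e1 : n * (n/β) = n^2/β := by ring
    have e2 : n * (n*(n-1)^2/(n-β)) = (n*(n-1))^2/(n-β) := by ring
    rw [e1, e2]
    exact add_le_add h1 h2
  have := le_of_mul_le_mul_left this hn0
  linarith [hmono]

/-! ### Basic facts about `infoMatrix` -/

theorem infoMatrix_apply_s12 {N : ℕ} (X : Finset (Fin N → ℝ)) (p : (Fin N → ℝ) → ℝ) (i j : Fin N) :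
    infoMatrix X p i j = ∑ x ∈ X, (p x / ∑ k, x k ^ 2) * (x i * x j) := by
  rw [infoMatrix, Matrix.sum_apply]
  exact Finset.sum_congr rfl fun x _ => by
    simp [Matrix.vecMulVec_apply]

theorem infoMatrix_isHermitian {N : ℕ} (X : Finset (Fin N → ℝ)) (p : (Fin N → ℝ) → ℝ) :
    (infoMatrix X p).IsHermitian := by
  ext i j
  simp only [Matrix.conjTranspose_apply, infoMatrix_apply_s12, star_trivial]
  exact Finset.sum_congr rfl fun x _ => by ring

theorem infoMatrix_quad {N : ℕ} (X : Finset (Fin N → ℝ)) (p : (Fin N → ℝ) → ℝ) (v : Fin N → ℝ) :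
    v ⬝ᵥ (infoMatrix X p *ᵥ v) = ∑ x ∈ X, (p x / ∑ k, x k ^ 2) * (∑ j, x j * v j)^2 := by
  have hsq : ∀ x : Fin N → ℝ, (∑ j, x j * v j)^2 = ∑ i, ∑ j, (x i * v i) * (x j * v j) := by
    intro x
    rw [sq, Finset.sum_mul_sum]
  simp only [dotProduct, Matrix.mulVec, dotProduct, infoMatrix_apply_s12, hsq,
    Finset.mul_sum, Finset.sum_mul]
  rw [Finset.sum_congr rfl fun i (_ : i ∈ (Finset.univ : Finset (Fin N))) => Finset.sum_comm]
  rw [Finset.sum_comm]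
  refine Finset.sum_congr rfl fun x _ => ?_
  rw [Finset.sum_comm]
  exact Finset.sum_congr rfl fun i _ => Finset.sum_congr rfl fun j _ => by ring

theorem infoMatrix_trace {N : ℕ} (X : Finset (Fin N → ℝ)) (p : (Fin N → ℝ) → ℝ) :
    (infoMatrix X p).trace = ∑ x ∈ X, (p x / ∑ k, x k ^ 2) * (∑ k, x k ^ 2) := by
  rw [infoMatrix, Matrix.trace_sum]
  refine Finset.sum_congr rfl fun x _ => ?_
  rw [Matrix.trace_smul, smul_eq_mul]
  congr 1
  simp [Matrix.trace, Matrix.diag, Matrix.vecMulVec_apply, sq]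

theorem infoMatrix_posSemidef {N : ℕ} (X : Finset (Fin N → ℝ)) (p : (Fin N → ℝ) → ℝ)
    (hp0 : ∀ x ∈ X, 0 ≤ p x) : (infoMatrix X p).PosSemidef := by
  refine Matrix.PosSemidef.of_dotProduct_mulVec_nonneg (infoMatrix_isHermitian X p) fun v => ?_
  have hsv : star v = v := funext fun _ => rfl
  rw [hsv, infoMatrix_quad]
  exact Finset.sum_nonneg fun x hx =>
    mul_nonneg (div_nonneg (hp0 x hx) (Finset.sum_nonneg fun k _ => sq_nonneg _)) (sq_nonneg _)

/-! ### Facts about members of `BK` -/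

theorem BK_sum_sq {N i : ℕ} {x : Fin N → ℝ} (hx : x ∈ BK N i) :
    (∑ j, x j ^ 2) = (i:ℝ) ∧ (∑ j, x j) = (i:ℝ) := by
  rw [BK, Finset.mem_image] at hx
  obtain ⟨s, hs, rfl⟩ := hx
  rw [Finset.mem_powersetCard] at hs
  have hcard : s.card = i := hs.2
  have h1 : (∑ j, (if j ∈ s then (1:ℝ) else 0)) = (i:ℝ) := by
    rw [Finset.sum_ite_mem, Finset.univ_inter, Finset.sum_const, hcard, nsmul_eq_mul, mul_one]
  constructor
  · have : ∀ j, ((if j ∈ s then (1:ℝ) else 0))^2 = (if j ∈ s then (1:ℝ) else 0) := by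
      intro j; split <;> norm_num
    rw [Finset.sum_congr rfl fun j _ => this j]
    exact h1
  · exact h1

/-! ### Spectral decomposition helpers -/

theorem exists_spectral {N : ℕ} {M : Matrix (Fin N) (Fin N) ℝ} (h0 : M.PosSemidef)
    (hdet : M.det ≠ 0) :
    ∃ (lam : Fin N → ℝ) (U : Matrix (Fin N) (Fin N) ℝ),
      (∀ i, 0 < lam i) ∧ M = U * Matrix.diagonal lam * star U ∧
        star U * U = 1 ∧ U * star U = 1 := by
  have hH := h0.1
  refine ⟨hH.eigenvalues, (hH.eigenvectorUnitary : Matrix (Fin N) (Fin N) ℝ), ?_, ?_, ?_, ?_⟩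
  · intro i
    rcases (h0.eigenvalues_nonneg i).lt_or_eq with h | h
    · exact h
    · exfalso
      apply hdet
      rw [hH.det_eq_prod_eigenvalues]
      exact Finset.prod_eq_zero (Finset.mem_univ i) (by exact_mod_cast h.symm)
  · have := hH.spectral_theorem
    rwa [RCLike.ofReal_real_eq_id, Function.id_comp] at this
  · exact mem_unitaryGroup_iff'.mp (hH.eigenvectorUnitary).2
  · exact mem_unitaryGroup_iff.mp (hH.eigenvectorUnitary).2

variable {N : ℕ} {M U : Matrix (Fin N) (Fin N) ℝ} {lam : Fin N → ℝ}

theorem trace_eq_spec (hMeq : M = U * Matrix.diagonal lam * star U)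
    (hUU' : star U * U = 1) : M.trace = ∑ i, lam i := by
  rw [hMeq, Matrix.trace_mul_cycle, hUU', Matrix.one_mul, Matrix.trace_diagonal]

theorem inv_eq_spec (hMeq : M = U * Matrix.diagonal lam * star U)
    (hUU' : star U * U = 1) (hUU : U * star U = 1) (hl : ∀ i, lam i ≠ 0) :
    M⁻¹ = U * Matrix.diagonal (fun i => (lam i)⁻¹) * star U := by
  apply Matrix.inv_eq_left_inv
  rw [hMeq]
  have key : ∀ X : Matrix (Fin N) (Fin N) ℝ, star U * (U * X) = X := fun X => by
    rw [← Matrix.mul_assoc, hUU', Matrix.one_mul]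
  simp only [Matrix.mul_assoc, key]
  rw [← Matrix.mul_assoc (Matrix.diagonal _) (Matrix.diagonal _), Matrix.diagonal_mul_diagonal]
  have : (fun i => (lam i)⁻¹ * lam i) = fun _ => (1:ℝ) :=
    funext fun i => inv_mul_cancel₀ (hl i)
  rw [this, Matrix.diagonal_one, Matrix.one_mul, hUU]

theorem trace_inv_spec (hMeq : M = U * Matrix.diagonal lam * star U)
    (hUU' : star U * U = 1) (hUU : U * star U = 1) (hl : ∀ i, lam i ≠ 0) :
    M⁻¹.trace = ∑ i, (lam i)⁻¹ := by
  rw [inv_eq_spec hMeq hUU' hUU hl, Matrix.trace_mul_cycle, hUU', Matrix.one_mul,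
    Matrix.trace_diagonal]

theorem coord_sq_sum (hUU : U * star U = 1) (u : Fin N → ℝ) :
    ∑ j, ((star U *ᵥ u) j)^2 = u ⬝ᵥ u := by
  have h1 : ∑ j, ((star U *ᵥ u) j)^2 = (star U *ᵥ u) ⬝ᵥ (star U *ᵥ u) := by
    simp [dotProduct, sq]
  rw [h1, Matrix.dotProduct_mulVec, Matrix.star_eq_conjTranspose,
    Matrix.conjTranspose_eq_transpose_of_trivial, Matrix.vecMul_transpose, Matrix.mulVec_mulVec,
    ← Matrix.conjTranspose_eq_transpose_of_trivial, ← Matrix.star_eq_conjTranspose, hUU,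
    Matrix.one_mulVec]

theorem quad_spec (hMeq : M = U * Matrix.diagonal lam * star U) (u : Fin N → ℝ) :
    u ⬝ᵥ (M *ᵥ u) = ∑ j, lam j * ((star U *ᵥ u) j)^2 := by
  rw [hMeq, ← Matrix.mulVec_mulVec, ← Matrix.mulVec_mulVec, Matrix.dotProduct_mulVec,
    ← Matrix.mulVec_transpose, ← Matrix.conjTranspose_eq_transpose_of_trivial,
    ← Matrix.star_eq_conjTranspose]
  simp [dotProduct, Matrix.mulVec_diagonal, sq]
  exact Finset.sum_congr rfl fun j _ => by ring

end Auxiliary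

/-- if `X ⊆ ∪_{i=K}^{N} B_i` is a nonempty finite set of binary
vectors each having at least `K` ones, then every probability distribution `p`
on `X` with invertible information matrix satisfies
`trace(M(p)⁻¹) ≥ N/K + N(N-1)²/(N-K)`. -/
theorem lower_bound_binary_at_least_K (N K : ℕ) (hN : 2 ≤ N) (hK1 : 1 ≤ K) (hKN : K < N)
    (X : Finset (Fin N → ℝ)) (hXne : X.Nonempty)
    (hX : ∀ x ∈ X, ∃ i ∈ Finset.Icc K N, x ∈ BK N i)
    (p : (Fin N → ℝ) → ℝ) (hp0 : ∀ x ∈ X, 0 ≤ p x) (hp1 : ∑ x ∈ X, p x = 1)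
    (hinv : IsUnit (infoMatrix X p)) :
    (N : ℝ) / K + N * ((N : ℝ) - 1) ^ 2 / ((N : ℝ) - K)
      ≤ (infoMatrix X p)⁻¹.trace := by
  -- facts about the elements of X
  have hxfact : ∀ x ∈ X, (K:ℝ) ≤ (∑ k, x k ^ 2) ∧ (∑ k, x k ^ 2) ≤ (N:ℝ) ∧
      (∑ k, x k) = (∑ k, x k ^ 2) := by
    intro x hx
    obtain ⟨i, hi, hmem⟩ := hX x hx
    rw [Finset.mem_Icc] at hi
    obtain ⟨h1, h2⟩ := BK_sum_sq hmem
    refine ⟨?_, ?_, ?_⟩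
    · rw [h1]; exact_mod_cast hi.1
    · rw [h1]; exact_mod_cast hi.2
    · rw [h1, h2]
  have hSpos : ∀ x ∈ X, (0:ℝ) < ∑ k, x k ^ 2 := by
    intro x hx
    have := (hxfact x hx).1
    have hk : (1:ℝ) ≤ (K:ℝ) := by exact_mod_cast hK1
    linarith
  -- positive semidefiniteness and nonzero determinant
  have hps := infoMatrix_posSemidef X p hp0
  have hdet : (infoMatrix X p).det ≠ 0 :=
    ((Matrix.isUnit_iff_isUnit_det _).mp hinv).ne_zero
  obtain ⟨lam, U, hl, hMeq, hUU', hUU⟩ := exists_spectral hps hdet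
  -- trace is 1
  have htr : (infoMatrix X p).trace = 1 := by
    rw [infoMatrix_trace]
    rw [Finset.sum_congr rfl fun x hx => div_mul_cancel₀ (p x) (hSpos x hx).ne']
    exact hp1
  have hsumlam : ∑ i, lam i = 1 := by
    rw [← trace_eq_spec hMeq hUU', htr]
  -- the all-ones vector
  set u : Fin N → ℝ := fun _ => 1 with hu
  set c : Fin N → ℝ := Matrix.mulVec (star U) u with hc
  have hcsq : ∑ j, (c j)^2 = (N:ℝ) := by
    rw [hc, coord_sq_sum hUU u]
    simp [dotProduct, hu]
  have hβ : (K:ℝ) ≤ ∑ j, lam j * (c j)^2 := by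
    rw [hc, ← quad_spec hMeq u, infoMatrix_quad]
    have hterm : ∀ x ∈ X, (p x / ∑ k, x k ^ 2) * (∑ j, x j * u j)^2 = p x * ∑ k, x k ^ 2 := by
      intro x hx
      have hS := (hSpos x hx).ne'
      have h3 := (hxfact x hx).2.2
      have : (∑ j, x j * u j) = ∑ k, x k ^ 2 := by
        rw [← h3]
        exact Finset.sum_congr rfl fun j _ => by rw [hu, mul_one]
      rw [this]
      field_simp
    rw [Finset.sum_congr rfl hterm]
    calc (K:ℝ) = ∑ x ∈ X, p x * K := by rw [← Finset.sum_mul, hp1, one_mul]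
      _ ≤ ∑ x ∈ X, p x * ∑ k, x k ^ 2 :=
        Finset.sum_le_sum fun x hx => mul_le_mul_of_nonneg_left (hxfact x hx).1 (hp0 x hx)
  -- conclude
  rw [trace_inv_spec hMeq hUU' hUU (fun i => (hl i).ne')]
  exact aux_key_ineq N K hN hK1 hKN lam c hl hsumlam hcsq hβ
end

section
/- Let N ≥ 2 and 1 ≤ K < N be integers and let X = ∪_{i=K}^{N} B_i be the set of all binary vectors in {0,1}^N with at least K ones. Then the probability distribution on X that is uniform on B_K and assigns zero probability to all other elements of X minimizes trace(M(p)⁻¹) over all probability distributions p on X for which M(p) is invertible, and the minimal value equals N/K + N·(N−1)²/(N−K). -/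
open Finset Matrix

namespace AuxUBK


noncomputable def ind (N : ℕ) (s : Finset (Fin N)) : Fin N → ℝ := fun i => if i ∈ s then 1 else 0

lemma ind_inj (N : ℕ) : Function.Injective (ind N) := by
  intro s t h
  ext a
  have := congrFun h a
  simp only [ind] at this
  by_cases hs : a ∈ s <;> by_cases ht : a ∈ t <;> simp [hs, ht] at this ⊢

lemma sum_ind (N : ℕ) (s : Finset (Fin N)) : ∑ i, ind N s i = s.card := by
  simp [ind]

lemma sum_ind_sq (N : ℕ) (s : Finset (Fin N)) : ∑ i, ind N s i ^ 2 = s.card := by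
  simp [ind, ite_pow]

lemma count_subsets {α : Type*} [DecidableEq α] (r u : Finset α) (h : Disjoint r u) (k : ℕ) :
    (((r ∪ u).powersetCard (k + r.card)).filter (fun t => r ⊆ t)).card = u.card.choose k := by
  rw [← Finset.card_powersetCard k u]
  apply Finset.card_nbij' (fun t => t \ r) (fun t => t ∪ r)
  · intro t ht
    simp only [Finset.mem_coe, mem_filter, mem_powersetCard] at ht ⊢
    obtain ⟨⟨hsub, hcard⟩, hr⟩ := ht
    constructor
    · intro a ha
      simp only [mem_sdiff] at ha
      rcases mem_union.mp (hsub ha.1) with h1 | h1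
      · exact absurd h1 ha.2
      · exact h1
    · rw [Finset.card_sdiff_of_subset hr, hcard]; omega
  · intro t ht
    simp only [Finset.mem_coe, mem_filter, mem_powersetCard] at ht ⊢
    obtain ⟨hsub, hcard⟩ := ht
    refine ⟨⟨Finset.union_subset (hsub.trans subset_union_right) subset_union_left, ?_⟩, subset_union_right⟩
    rw [Finset.card_union_of_disjoint (h.symm.mono_left hsub), hcard, Nat.add_comm]
  · intro t ht
    simp only [Finset.mem_coe, mem_filter, mem_powersetCard] at ht
    exact Finset.sdiff_union_of_subset ht.2
  · intro t ht
    simp only [Finset.mem_coe, mem_powersetCard] at ht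
    exact Finset.union_sdiff_cancel_right (h.symm.mono_left ht.1)



lemma count_one (N K : ℕ) (hK : 1 ≤ K) (a : Fin N) :
    ((Finset.univ.powersetCard K).filter (fun t => a ∈ t)).card = (N-1).choose (K-1) := by
  classical
  have h1 : ({a} : Finset (Fin N)) ∪ Finset.univ.erase a = Finset.univ := by
    ext x
    by_cases hx : x = a <;> simp [hx]
  have hd : Disjoint ({a} : Finset (Fin N)) (Finset.univ.erase a) := by
    simp
  have := count_subsets ({a} : Finset (Fin N)) (Finset.univ.erase a) hd (K - 1)
  rw [h1] at this
  simp only [Finset.card_singleton] at this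
  rw [Nat.sub_add_cancel hK] at this
  rw [Finset.card_erase_of_mem (Finset.mem_univ a), Finset.card_univ, Fintype.card_fin] at this
  rw [← this]
  congr 1
  ext t
  simp [Finset.singleton_subset_iff]

lemma count_two (N K : ℕ) (hK : 2 ≤ K) (a b : Fin N) (hab : a ≠ b) :
    ((Finset.univ.powersetCard K).filter (fun t => a ∈ t ∧ b ∈ t)).card
      = (N-2).choose (K-2) := by
  classical
  set r : Finset (Fin N) := {a, b} with hr
  have hrc : r.card = 2 := by rw [hr, Finset.card_insert_of_notMem (by simpa using hab)]; simp
  have h1 : r ∪ (Finset.univ \ r) = Finset.univ := by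
    simp [Finset.union_sdiff_of_subset]
  have hd : Disjoint r (Finset.univ \ r) := Finset.disjoint_sdiff
  have := count_subsets r (Finset.univ \ r) hd (K - 2)
  rw [h1, hrc, Nat.sub_add_cancel hK] at this
  rw [Finset.card_sdiff_of_subset (Finset.subset_univ r), hrc, Finset.card_univ, Fintype.card_fin] at this
  rw [← this]
  congr 1
  ext t
  simp [hr, Finset.insert_subset_iff, Finset.singleton_subset_iff]

lemma count_two_one (N : ℕ) (a b : Fin N) (hab : a ≠ b) :
    ((Finset.univ.powersetCard 1).filter (fun t => a ∈ t ∧ b ∈ t)) = ∅ := by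
  classical
  rw [Finset.filter_eq_empty_iff]
  intro t ht
  rw [Finset.mem_powersetCard] at ht
  obtain ⟨c, hc⟩ := Finset.card_eq_one.mp ht.2
  rintro ⟨ha, hb⟩
  rw [hc, Finset.mem_singleton] at ha hb
  exact hab (ha.trans hb.symm)


noncomputable def Jmat (N : ℕ) : Matrix (Fin N) (Fin N) ℝ := Matrix.of fun _ _ => 1

lemma Jmat_mul_Jmat (N : ℕ) : Jmat N * Jmat N = (N : ℝ) • Jmat N := by
  ext i j
  simp [Jmat, Matrix.mul_apply]

lemma trace_Jmat (N : ℕ) : (Jmat N).trace = N := by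
  simp [Jmat, Matrix.trace, Matrix.diag]

lemma transpose_Jmat (N : ℕ) : (Jmat N)ᵀ = Jmat N := by
  ext i j; simp [Jmat]

@[simp] lemma Jmat_apply (N : ℕ) (a b : Fin N) : Jmat N a b = 1 := rfl

lemma trace_vecMulVec' {N : ℕ} (x y : Fin N → ℝ) :
    (vecMulVec x y).trace = ∑ i, x i * y i := by
  simp [Matrix.trace, Matrix.diag, vecMulVec_apply]

lemma conj_vecMulVec {N : ℕ} (B : Matrix (Fin N) (Fin N) ℝ) (x : Fin N → ℝ) :
    B * vecMulVec x x * Bᵀ = vecMulVec (B *ᵥ x) (B *ᵥ x) := by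
  ext i j
  simp only [Matrix.mul_apply, vecMulVec_apply, Matrix.transpose_apply, Matrix.mulVec,
    dotProduct, Finset.sum_mul, Finset.mul_sum]
  apply Finset.sum_congr rfl
  intro a _
  apply Finset.sum_congr rfl
  intro b _
  ring

lemma conj_info {N : ℕ} (B : Matrix (Fin N) (Fin N) ℝ) (X : Finset (Fin N → ℝ))
    (p : (Fin N → ℝ) → ℝ) :
    B * (∑ x ∈ X, (p x / ∑ i, x i ^ 2) • Matrix.vecMulVec x x) * Bᵀ
      = ∑ x ∈ X, (p x / ∑ i, x i ^ 2) • vecMulVec (B *ᵥ x) (B *ᵥ x) := by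
  rw [Finset.mul_sum, Finset.sum_mul]
  apply Finset.sum_congr rfl
  intro x _
  rw [Matrix.mul_smul, Matrix.smul_mul, conj_vecMulVec]

lemma transpose_info {N : ℕ} (X : Finset (Fin N → ℝ)) (p : (Fin N → ℝ) → ℝ) :
    (∑ x ∈ X, (p x / ∑ i, x i ^ 2) • Matrix.vecMulVec x x)ᵀ
      = ∑ x ∈ X, (p x / ∑ i, x i ^ 2) • Matrix.vecMulVec x x := by
  rw [Matrix.transpose_sum]
  apply Finset.sum_congr rfl
  intro x _
  rw [Matrix.transpose_smul]
  congr 1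
  ext i j
  simp [vecMulVec_apply, mul_comm]

lemma smul_one_add_smul_Jmat_mulVec (N : ℕ) (d₁ d₂ : ℝ) (x : Fin N → ℝ) :
    (d₁ • (1 : Matrix (Fin N) (Fin N) ℝ) + d₂ • Jmat N) *ᵥ x
      = fun j => d₁ * x j + d₂ * ∑ i, x i := by
  ext j
  simp [Matrix.add_mulVec, Matrix.smul_mulVec, Matrix.mulVec, dotProduct, Jmat,
    Matrix.one_apply, Finset.mul_sum, add_mul, Finset.sum_add_distrib, ite_mul, zero_mul]





noncomputable def ind' (N : ℕ) (s : Finset (Fin N)) : Fin N → ℝ := ind N s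

lemma BK_eq (N K : ℕ) : BK N K = (Finset.univ.powersetCard K).image (ind N) := rfl

lemma card_BK (N K : ℕ) : (BK N K).card = N.choose K := by
  rw [BK_eq, Finset.card_image_of_injective _ (ind_inj N), Finset.card_powersetCard,
    Finset.card_univ, Fintype.card_fin]

lemma mem_BK {N i : ℕ} {x : Fin N → ℝ} :
    x ∈ BK N i ↔ ∃ s : Finset (Fin N), s.card = i ∧ x = ind N s := by
  rw [BK_eq, Finset.mem_image]
  constructor
  · rintro ⟨s, hs, rfl⟩
    exact ⟨s, Finset.mem_powersetCard_univ.mp hs, rfl⟩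
  · rintro ⟨s, hs, rfl⟩
    exact ⟨s, Finset.mem_powersetCard_univ.mpr hs, rfl⟩

lemma DmulD (N : ℕ) (a b c d : ℝ) :
    (a • (1 : Matrix (Fin N) (Fin N) ℝ) + b • Jmat N) * (c • (1 : Matrix (Fin N) (Fin N) ℝ) + d • Jmat N)
      = (a*c) • (1 : Matrix (Fin N) (Fin N) ℝ) + (a*d + b*c + (N:ℝ)*(b*d)) • Jmat N := by
  simp only [add_mul, mul_add, Matrix.smul_mul, Matrix.mul_smul, one_mul, mul_one,
    Jmat_mul_Jmat, smul_smul, add_smul]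
  module

end AuxUBK

open AuxUBK

set_option maxHeartbeats 1000000 in
open Classical in
/-- on `X = ∪_{i=K}^{N} B_i`, the distribution which is uniform
on `B_K` and zero elsewhere is a minimizer of `trace(M(p)⁻¹)` over all
probability distributions on `X` with invertible information matrix, and the
minimum value is `N/K + N(N-1)²/(N-K)`. -/
theorem uniform_on_BK_optimal_on_union (N K : ℕ) (hN : 2 ≤ N) (hK1 : 1 ≤ K) (hKN : K < N) :
    let X : Finset (Fin N → ℝ) := (Finset.Icc K N).biUnion (fun i => BK N i)
    let q : (Fin N → ℝ) → ℝ := fun x => if x ∈ BK N K then (N.choose K : ℝ)⁻¹ else 0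
    (∀ x ∈ X, 0 ≤ q x) ∧ (∑ x ∈ X, q x) = 1 ∧
    IsUnit (infoMatrix X q) ∧
    (infoMatrix X q)⁻¹.trace = (N : ℝ) / K + N * ((N : ℝ) - 1) ^ 2 / ((N : ℝ) - K) ∧
    (∀ p : (Fin N → ℝ) → ℝ, (∀ x ∈ X, 0 ≤ p x) → (∑ x ∈ X, p x) = 1 →
      IsUnit (infoMatrix X p) →
      (infoMatrix X q)⁻¹.trace ≤ (infoMatrix X p)⁻¹.trace) := by
  intro X q
  have hn2 : (2:ℝ) ≤ (N:ℝ) := by exact_mod_cast hN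
  have hk1 : (1:ℝ) ≤ (K:ℝ) := by exact_mod_cast hK1
  have hkn : (K:ℝ) < (N:ℝ) := by exact_mod_cast hKN
  have h0n : (0:ℝ) < N := by linarith
  have h0k : (0:ℝ) < K := by linarith
  have h0n1 : (0:ℝ) < (N:ℝ) - 1 := by linarith
  have h0nk : (0:ℝ) < (N:ℝ) - K := by linarith
  have hC0 : (0:ℝ) < (N.choose K : ℝ) := by
    exact_mod_cast Nat.choose_pos (le_of_lt hKN)
  have hBKsub : BK N K ⊆ X := by
    intro x hx
    refine Finset.mem_biUnion.mpr ⟨K, ?_, hx⟩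
    simp [Finset.mem_Icc, le_of_lt hKN]
  have hXstruct : ∀ x ∈ X, ∃ m : ℕ, K ≤ m ∧ (∑ i, x i ^ 2) = (m:ℝ) ∧ (∑ i, x i) = (m:ℝ) := by
    intro x hx
    obtain ⟨i, hi, hxB⟩ := Finset.mem_biUnion.mp hx
    obtain ⟨s, hcard, rfl⟩ := mem_BK.mp hxB
    exact ⟨i, (Finset.mem_Icc.mp hi).1, by rw [sum_ind_sq, hcard], by rw [sum_ind, hcard]⟩
  -- the constants
  set c₁ : ℝ := ((N:ℝ) - K)/((N:ℝ)*((N:ℝ)-1)) with hc₁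
  set c₂ : ℝ := ((K:ℝ) - 1)/((N:ℝ)*((N:ℝ)-1)) with hc₂
  set d₁ : ℝ := (N:ℝ)*((N:ℝ)-1)/((N:ℝ)-K) with hd₁
  set d₂ : ℝ := (N:ℝ)*(1-(K:ℝ))/((K:ℝ)*((N:ℝ)-K)) with hd₂
  set A : Matrix (Fin N) (Fin N) ℝ := d₁ • (1 : Matrix (Fin N) (Fin N) ℝ) + d₂ • Jmat N with hA
  -- computation of infoMatrix X q
  have hMq : infoMatrix X q = c₁ • (1 : Matrix (Fin N) (Fin N) ℝ) + c₂ • Jmat N := by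
    have step1 : infoMatrix X q
        = ∑ x ∈ BK N K, (((N.choose K : ℝ)⁻¹) / ∑ i, x i ^ 2) • Matrix.vecMulVec x x := by
      rw [infoMatrix]
      rw [← Finset.sum_subset hBKsub]
      · apply Finset.sum_congr rfl
        intro x hx
        have : q x = (N.choose K : ℝ)⁻¹ := by simp only [q, if_pos hx]
        rw [this]
      · intro x hx hnx
        have : q x = 0 := by simp only [q, if_neg hnx]
        rw [this, zero_div, zero_smul]
    have step2 : infoMatrix X q
        = ∑ s ∈ Finset.univ.powersetCard K,
            (((N.choose K : ℝ)⁻¹) / (K:ℝ)) • Matrix.vecMulVec (ind N s) (ind N s) := by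
      rw [step1, BK_eq, Finset.sum_image (fun s _ t _ h => ind_inj N h)]
      apply Finset.sum_congr rfl
      intro s hs
      rw [sum_ind_sq, Finset.mem_powersetCard_univ.mp hs]
    rw [step2]
    ext a b
    rw [Matrix.sum_apply]
    have entry : ∀ s : Finset (Fin N),
        ((((N.choose K : ℝ)⁻¹) / (K:ℝ)) • Matrix.vecMulVec (ind N s) (ind N s)) a b
          = if a ∈ s ∧ b ∈ s then ((N.choose K : ℝ)⁻¹) / (K:ℝ) else 0 := by
      intro s
      rw [Matrix.smul_apply, Matrix.vecMulVec_apply]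
      simp only [ind]
      split_ifs with h1 h2 h3 h2 <;> simp_all <;> ring
    rw [Finset.sum_congr rfl (fun s _ => entry s), ← Finset.sum_filter,
      Finset.sum_const, nsmul_eq_mul]
    rw [Matrix.add_apply, Matrix.smul_apply, Matrix.smul_apply, Matrix.one_apply]
    by_cases hab : a = b
    · subst hab
      have hfilter : (Finset.univ.powersetCard K).filter (fun s => a ∈ s ∧ a ∈ s)
          = (Finset.univ.powersetCard K).filter (fun s => a ∈ s) := by
        apply Finset.filter_congr; intro s _; simp
      rw [if_pos rfl, hfilter, count_one N K hK1 a]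
      -- identity : N * choose (N-1) (K-1) = choose N K * K
      have hnat : N * (N-1).choose (K-1) = N.choose K * K := by
        have h := Nat.add_one_mul_choose_eq (N-1) (K-1)
        have e1 : N - 1 + 1 = N := by omega
        have e2 : K - 1 + 1 = K := by omega
        simpa [Nat.succ_eq_add_one, e1, e2] using h
      have hcast : (N:ℝ) * ((N-1).choose (K-1) : ℝ) = (N.choose K : ℝ) * K := by
        exact_mod_cast congrArg (Nat.cast : ℕ → ℝ) hnat
      have hch1 : (((N-1).choose (K-1) : ℕ) : ℝ) = (N.choose K : ℝ) * K / (N:ℝ) := by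
        field_simp
        linarith [hcast]
      rw [hch1, hc₁, hc₂, Jmat_apply]
      simp only [smul_eq_mul, mul_one]
      field_simp
      ring
    · rw [if_neg hab]
      by_cases hK1' : K = 1
      · subst hK1'
        rw [count_two_one N a b hab]
        simp [hc₂]
      · have hK2 : 2 ≤ K := by omega
        rw [count_two N K hK2 a b hab]
        have hnat : N * ((N-1) * (N-2).choose (K-2)) = N.choose K * K * (K-1) := by
          have h1 := Nat.add_one_mul_choose_eq (N-1) (K-1)
          have h2 := Nat.add_one_mul_choose_eq (N-2) (K-2)
          have e1 : N - 1 + 1 = N := by omega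
          have e2 : K - 1 + 1 = K := by omega
          have e3 : N - 2 + 1 = N - 1 := by omega
          have e4 : K - 2 + 1 = K - 1 := by omega
          simp only [Nat.succ_eq_add_one, e1, e2] at h1
          simp only [Nat.succ_eq_add_one, e3, e4] at h2
          calc N * ((N-1) * (N-2).choose (K-2)) = N * ((N-1).choose (K-1) * (K-1)) := by rw [h2]
            _ = N * (N-1).choose (K-1) * (K-1) := by ring
            _ = N.choose K * K * (K-1) := by rw [h1]
        have hcast : (N:ℝ) * (((N:ℝ)-1) * ((N-2).choose (K-2) : ℝ))
            = (N.choose K : ℝ) * K * ((K:ℝ)-1) := by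
          have := congrArg (Nat.cast : ℕ → ℝ) hnat
          push_cast [Nat.cast_sub (by omega : 1 ≤ N), Nat.cast_sub (by omega : 1 ≤ K)] at this
          convert this using 2 <;> push_cast <;> ring
        have hch2 : (((N-2).choose (K-2) : ℕ) : ℝ)
            = (N.choose K : ℝ) * K * ((K:ℝ)-1) / ((N:ℝ) * ((N:ℝ)-1)) := by
          field_simp
          nlinarith [hcast]
        rw [hch2, hc₂, Jmat_apply]
        simp only [smul_eq_mul, mul_one]
        field_simp
        ring
  -- inverse facts
  have hc₁d₁ : c₁ * d₁ = 1 := by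
    rw [hc₁, hd₁]; field_simp
  have hzero : c₁*d₂ + c₂*d₁ + (N:ℝ)*(c₂*d₂) = 0 := by
    rw [hc₁, hc₂, hd₁, hd₂]; field_simp; ring
  have hzero' : d₁*c₂ + d₂*c₁ + (N:ℝ)*(d₂*c₂) = 0 := by
    rw [hc₁, hc₂, hd₁, hd₂]; field_simp; ring
  have hMA : (c₁ • (1 : Matrix (Fin N) (Fin N) ℝ) + c₂ • Jmat N) * A = 1 := by
    rw [hA, DmulD, hc₁d₁, hzero, one_smul, zero_smul, add_zero]
  have hAM : A * (c₁ • (1 : Matrix (Fin N) (Fin N) ℝ) + c₂ • Jmat N) = 1 := by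
    rw [hA, DmulD, hzero']
    rw [show d₁ * c₁ = 1 by rw [mul_comm]; exact hc₁d₁]
    rw [one_smul, zero_smul, add_zero]
  have hUnit : IsUnit (infoMatrix X q) := by
    rw [hMq]; exact ⟨⟨_, A, hMA, hAM⟩, rfl⟩
  have hInvq : (infoMatrix X q)⁻¹ = A := by
    rw [hMq]; exact Matrix.inv_eq_right_inv hMA
  have htrA : A.trace = (N : ℝ) / K + N * ((N : ℝ) - 1) ^ 2 / ((N : ℝ) - K) := by
    rw [hA, Matrix.trace_add, Matrix.trace_smul, Matrix.trace_smul, Matrix.trace_one,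
      trace_Jmat, Fintype.card_fin, smul_eq_mul, smul_eq_mul, hd₁, hd₂]
    field_simp
    ring
  refine ⟨?_, ?_, hUnit, ?_, ?_⟩
  · intro x _
    by_cases hx : x ∈ BK N K
    · have : q x = (N.choose K : ℝ)⁻¹ := if_pos hx
      rw [this]; positivity
    · have : q x = 0 := if_neg hx
      rw [this]
  · -- sum q = 1
    rw [← Finset.sum_subset hBKsub]
    · have : ∀ x ∈ BK N K, q x = (N.choose K : ℝ)⁻¹ := by
        intro x hx; simp only [q, if_pos hx]
      rw [Finset.sum_congr rfl this, Finset.sum_const, card_BK, nsmul_eq_mul]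
      field_simp
    · intro x _ hnx
      simp only [q, if_neg hnx]
  · rw [hInvq, htrA]
  · -- minimality
    intro p hp hpsum hUp
    rw [hInvq, htrA]
    set M : Matrix (Fin N) (Fin N) ℝ := infoMatrix X p with hM
    have hdet : IsUnit M.det := (Matrix.isUnit_iff_isUnit_det M).mp hUp
    have hMW : M * M⁻¹ = 1 := Matrix.mul_nonsing_inv _ hdet
    have hWM : M⁻¹ * M = 1 := Matrix.nonsing_inv_mul _ hdet
    have hMsym : Mᵀ = M := transpose_info X p
    have hAsym : Aᵀ = A := by
      rw [hA, Matrix.transpose_add, Matrix.transpose_smul, Matrix.transpose_smul,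
        Matrix.transpose_one, transpose_Jmat]
    have hWsym : (M⁻¹)ᵀ = M⁻¹ := by
      rw [Matrix.transpose_nonsing_inv, hMsym]
    have conj_trace : ∀ B : Matrix (Fin N) (Fin N) ℝ,
        (B * M * Bᵀ).trace = ∑ x ∈ X, (p x / ∑ i, x i ^ 2) * ∑ j, ((B *ᵥ x) j)^2 := by
      intro B
      have h1 : B * M * Bᵀ = ∑ x ∈ X, (p x / ∑ i, x i ^ 2) • vecMulVec (B *ᵥ x) (B *ᵥ x) :=
        conj_info B X p
      rw [h1, Matrix.trace_sum]
      apply Finset.sum_congr rfl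
      intro x _
      rw [Matrix.trace_smul, trace_vecMulVec', smul_eq_mul]
      congr 1
      apply Finset.sum_congr rfl
      intro j _
      ring
    set Cm : Matrix (Fin N) (Fin N) ℝ := M⁻¹ - A with hCm
    have hCsym : Cmᵀ = Cm := by rw [hCm, Matrix.transpose_sub, hWsym, hAsym]
    have key_pos : 0 ≤ (Cm * M * Cmᵀ).trace := by
      rw [conj_trace]
      apply Finset.sum_nonneg
      intro x hx
      obtain ⟨m, hKm, hsq, _⟩ := hXstruct x hx
      apply mul_nonneg
      · apply div_nonneg (hp x hx)
        rw [hsq]; positivity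
      · apply Finset.sum_nonneg; intro j _; positivity
    have expand : Cm * M * Cmᵀ = M⁻¹*M*M⁻¹ - M⁻¹*M*A - A*M*M⁻¹ + A*M*A := by
      rw [hCsym, hCm]; noncomm_ring
    have expand2 : Cm * M * Cmᵀ = M⁻¹ - A - A + A*M*A := by
      rw [expand, hWM, one_mul, one_mul, mul_assoc, hMW, mul_one]
    have htr_ineq : 0 ≤ M⁻¹.trace - A.trace - A.trace + (A*M*A).trace := by
      have := key_pos
      rw [expand2] at this
      simpa [Matrix.trace_add, Matrix.trace_sub] using this
    -- bound on trace (A*M*A)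
    have hAMA : (A*M*A).trace = ∑ x ∈ X, (p x / ∑ i, x i ^ 2) * ∑ j, ((A *ᵥ x) j)^2 := by
      have : A*M*A = A*M*Aᵀ := by rw [hAsym]
      rw [this, conj_trace]
    set e₂ : ℝ := 2*d₁*d₂ + (N:ℝ)*d₂^2 with he₂def
    have he₂ : e₂ ≤ 0 := by
      have h1 : d₂ ≤ 0 := by
        rw [hd₂]
        apply div_nonpos_of_nonpos_of_nonneg
        · nlinarith
        · positivity
      have h2 : 0 ≤ 2*d₁ + (N:ℝ)*d₂ := by
        have : 2*d₁ + (N:ℝ)*d₂ = (N:ℝ)*((K:ℝ)*((N:ℝ)-2)+(N:ℝ))/((K:ℝ)*((N:ℝ)-K)) := by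
          rw [hd₁, hd₂]; field_simp; ring
        rw [this]
        apply div_nonneg
        · nlinarith
        · positivity
      calc e₂ = d₂ * (2*d₁ + (N:ℝ)*d₂) := by rw [he₂def]; ring
        _ ≤ 0 := mul_nonpos_of_nonpos_of_nonneg h1 h2
    have hVeq : d₁^2 + e₂ * K = (N : ℝ) / K + N * ((N : ℝ) - 1) ^ 2 / ((N : ℝ) - K) := by
      rw [he₂def, hd₁, hd₂]; field_simp; ring
    have hbound : (A*M*A).trace ≤ (N : ℝ) / K + N * ((N : ℝ) - 1) ^ 2 / ((N : ℝ) - K) := by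
      rw [hAMA]
      calc ∑ x ∈ X, (p x / ∑ i, x i ^ 2) * ∑ j, ((A *ᵥ x) j)^2
          ≤ ∑ x ∈ X, p x * ((N : ℝ) / K + N * ((N : ℝ) - 1) ^ 2 / ((N : ℝ) - K)) := by
            apply Finset.sum_le_sum
            intro x hx
            obtain ⟨m, hKm, hsq, hsum⟩ := hXstruct x hx
            have hm1 : (1:ℝ) ≤ m := by
              have : (K:ℝ) ≤ m := by exact_mod_cast hKm
              linarith
            have hmvec : (A *ᵥ x) = fun j => d₁ * x j + d₂ * (m:ℝ) := by
              rw [hA, smul_one_add_smul_Jmat_mulVec, hsum]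
            have hexp : ∑ j, ((A *ᵥ x) j)^2
                = d₁^2*(m:ℝ) + e₂*(m:ℝ)^2 := by
              rw [hmvec]
              have term : ∀ j : Fin N, (d₁ * x j + d₂ * (m:ℝ))^2
                  = d₁^2*(x j^2) + (2*d₁*d₂*(m:ℝ))*(x j) + d₂^2*(m:ℝ)^2 := by
                intro j; ring
              rw [Finset.sum_congr rfl (fun j _ => term j)]
              rw [Finset.sum_add_distrib, Finset.sum_add_distrib, ← Finset.mul_sum,
                ← Finset.mul_sum, hsq, hsum, Finset.sum_const, Finset.card_univ,
                Fintype.card_fin, nsmul_eq_mul, he₂def]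
              ring
            rw [hexp, hsq]
            have hm0 : (0:ℝ) < m := by linarith
            have hrw : (p x / (m:ℝ)) * (d₁^2*(m:ℝ) + e₂*(m:ℝ)^2)
                = p x * (d₁^2 + e₂*(m:ℝ)) := by
              field_simp
            rw [hrw]
            apply mul_le_mul_of_nonneg_left _ (hp x hx)
            rw [← hVeq]
            have hkm : (K:ℝ) ≤ (m:ℝ) := by exact_mod_cast hKm
            nlinarith
        _ = (N : ℝ) / K + N * ((N : ℝ) - 1) ^ 2 / ((N : ℝ) - K) := by
            rw [← Finset.sum_mul, hpsum, one_mul]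
    have h2V : A.trace = (N : ℝ) / K + N * ((N : ℝ) - 1) ^ 2 / ((N : ℝ) - K) := htrA
    linarith [htr_ineq, hbound, h2V]
end
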